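/- If β : V × U → W is a flat bilinear form between finite-dimensional real vector spaces with W an inner product space, then dim(Δ_β) ≥ dim(V) − dim(W), where Δ_β is the left nullity of β. -/

import Mathlib

open Module LinearMap RealInnerProductSpace

/-- For a flat bilinear form `β : V × U → W`, the left nullity has dimension at least
`dim V - dim W`. -/
theorem flat_nullity_dim_lower_bound
    {V U W : Type*} [AddCommGroup V] [Module ℝ V] [FiniteDimensional ℝ V]
    [AddCommGroup U] [Module ℝ U] [FiniteDimensional ℝ U]
    [NormedAddCommGroup W] [InnerProductSpace ℝ W] [FiniteDimensional ℝ W]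
    (β : V →ₗ[ℝ] U →ₗ[ℝ] W)
    (hflat : ∀ (X Z : V) (Y T : U), ⟪β X Y, β Z T⟫ = ⟪β X T, β Z Y⟫) :
    finrank ℝ V - finrank ℝ W ≤ finrank ℝ (ker β) := by
  classical
  set f : U → ℕ := fun Y => finrank ℝ (LinearMap.range (β.flip Y)) with hf
  have hbdd : ∀ Y, f Y ≤ finrank ℝ W := fun Y => (LinearMap.range (β.flip Y)).finrank_le
  obtain ⟨Y0, hY0max⟩ : ∃ Y0, ∀ Y, f Y ≤ f Y0 := by
    have h1 : (Set.range f).Nonempty := ⟨f 0, ⟨0, rfl⟩⟩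
    have h2 : BddAbove (Set.range f) := ⟨finrank ℝ W, by rintro _ ⟨Y, rfl⟩; exact hbdd Y⟩
    obtain ⟨Y0, hY0⟩ := Nat.sSup_mem h1 h2
    exact ⟨Y0, fun Y => hY0 ▸ le_csSup h2 ⟨Y, rfl⟩⟩
  have key : LinearMap.ker (β.flip Y0) ≤ LinearMap.ker β := by
    intro X hX
    rw [LinearMap.mem_ker, LinearMap.flip_apply] at hX
    rw [LinearMap.mem_ker]
    ext Y
    rw [LinearMap.zero_apply]
    set E := LinearMap.range (β.flip Y0) with hE
    have hperp : ∀ Y' : U, β X Y' ∈ Eᗮ := by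
      intro Y'
      rw [Submodule.mem_orthogonal]
      rintro _ ⟨Z, rfl⟩
      rw [LinearMap.flip_apply]
      calc ⟪β Z Y0, β X Y'⟫ = ⟪β Z Y', β X Y0⟫ := hflat Z X Y0 Y'
        _ = 0 := by rw [hX, inner_zero_right]
    set r := finrank ℝ E with hr
    set b : Basis (Fin r) ℝ E := finBasis ℝ E with hb
    have he : ∀ j, ∃ v : V, β.flip Y0 v = (b j : W) := fun j => (b j).2
    choose e he using he
    set proj : W →ₗ[ℝ] E := (Submodule.orthogonalProjectionOnto E).toLinearMap with hproj
    set c : Fin r → E := fun j => proj (β (e j) Y) with hc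
    set N : Matrix (Fin r) (Fin r) (Polynomial ℝ) :=
      Matrix.of fun i j => (if j = i then 1 else 0)
        + Polynomial.X * Polynomial.C ((b.repr (c j)) i) with hN
    have hN0 : N.map (Polynomial.evalRingHom 0) = 1 := by
      ext i j
      simp only [Matrix.map_apply, hN, Matrix.of_apply, map_add, map_mul,
        Polynomial.coe_evalRingHom, Polynomial.eval_X, Polynomial.eval_C, Matrix.one_apply]
      split_ifs with h1 h2 h3 <;> simp_all
    have hp0 : N.det.eval 0 = 1 := by
      have := RingHom.map_det (Polynomial.evalRingHom 0) N
      rw [RingHom.mapMatrix_apply, hN0, Matrix.det_one] at this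
      simpa using this
    have hpne : Polynomial.X * N.det ≠ 0 := by
      intro h
      rcases mul_eq_zero.mp h with h | h
      · exact Polynomial.X_ne_zero h
      · rw [h] at hp0; simp at hp0
    obtain ⟨t, ht⟩ : ∃ t : ℝ, (Polynomial.X * N.det).eval t ≠ 0 := by
      by_contra h
      push_neg at h
      exact hpne (Polynomial.funext fun x => by simpa using h x)
    rw [Polynomial.eval_mul, Polynomial.eval_X, mul_ne_zero_iff] at ht
    obtain ⟨ht0, htdet⟩ := ht
    set β' : V →ₗ[ℝ] W := β.flip (Y0 + t • Y) with hβ'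
    set φ : V →ₗ[ℝ] E := proj ∘ₗ β' with hφ
    have hφe : ∀ j, φ (e j) = b j + t • c j := by
      intro j
      have : β' (e j) = (b j : W) + t • β (e j) Y := by
        rw [hβ', LinearMap.flip_apply, map_add, map_smul, ← he j, LinearMap.flip_apply]
      rw [hφ, LinearMap.comp_apply, this, map_add, map_smul, hc]
      congr 1
      exact Submodule.orthogonalProjectionOnto_mem_subspace_eq_self (b j)
    have hM : b.toMatrix (fun j => φ (e j)) = N.map (Polynomial.evalRingHom t) := by
      ext i j
      rw [Basis.toMatrix_apply, hφe j]
      simp only [map_add, map_smul, Finsupp.add_apply, Finsupp.smul_apply, Basis.repr_self,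
        Matrix.map_apply, hN, Matrix.of_apply, Polynomial.coe_evalRingHom, Polynomial.eval_add,
        Polynomial.eval_mul, Polynomial.eval_X, Polynomial.eval_C, Finsupp.single_apply,
        smul_eq_mul]
      split_ifs <;> simp
    have hdet : (b.toMatrix fun j => φ (e j)).det ≠ 0 := by
      rw [hM, ← RingHom.mapMatrix_apply, ← RingHom.map_det]
      simpa using htdet
    have li : LinearIndependent ℝ (fun j => φ (e j)) := by
      have : IsUnit (b.det fun j => φ (e j)) := by
        rw [Basis.det_apply]; exact isUnit_iff_ne_zero.mpr hdet
      exact ((Basis.is_basis_iff_det b).mpr this).1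
    have hrankφ : r ≤ finrank ℝ (LinearMap.range φ) := by
      have li' : LinearIndependent ℝ
          (fun j => (⟨φ (e j), LinearMap.mem_range_self φ (e j)⟩ :
            LinearMap.range φ)) := by
        apply LinearIndependent.of_comp (LinearMap.range φ).subtype
        exact li
      simpa using li'.fintype_card_le_finrank
    have hrankβ' : finrank ℝ (LinearMap.range β') ≤ r := hY0max (Y0 + t • Y)
    have hrankφle : finrank ℝ (LinearMap.range φ) ≤ finrank ℝ (LinearMap.range β') := by
      rw [hφ, LinearMap.range_comp]
      exact Submodule.finrank_map_le proj _
    have a1 := LinearMap.finrank_range_add_finrank_ker β'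
    have a2 := LinearMap.finrank_range_add_finrank_ker φ
    have hkereq : LinearMap.ker β' = LinearMap.ker φ :=
      Submodule.eq_of_le_of_finrank_le (LinearMap.ker_le_ker_comp β' proj) (by omega)
    have hXφ : X ∈ LinearMap.ker φ := by
      rw [LinearMap.mem_ker, hφ, LinearMap.comp_apply, hβ', LinearMap.flip_apply,
        map_add, map_smul, hX, zero_add, map_smul]
      have : proj (β X Y) = 0 :=
        Submodule.orthogonalProjectionOnto_apply_of_mem_orthogonal (hperp Y)
      rw [this, smul_zero]
    rw [← hkereq, LinearMap.mem_ker, hβ', LinearMap.flip_apply, map_add, map_smul, hX,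
      zero_add] at hXφ
    exact (smul_eq_zero.mp hXφ).resolve_left ht0
  have h1 := LinearMap.finrank_range_add_finrank_ker (β.flip Y0)
  have h2 : finrank ℝ (LinearMap.ker (β.flip Y0)) ≤ finrank ℝ (LinearMap.ker β) :=
    Submodule.finrank_mono key
  have h3 := hbdd Y0
  simp only [hf] at h3 h1
  omega
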